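/- Let (Ω, ℱ, P) be a probability space with sub-σ-algebras ℱ_s ⊆ ℋ ⊆ ℱ. Let η : Ω → ℝ be a random variable independent of ℋ and exponentially distributed with rate 1, let Γ_s : Ω → [0,∞) be ℱ_s-measurable, and let D : Ω → (0,∞) be an ℋ-measurable integrable random variable with E_P[D] = 1. Define the probability measure Q := D · P. Then Q( Γ_s < η | ℱ_s ) = exp(−Γ_s) Q-almost surely. -/

import Mathlib

open MeasureTheory ProbabilityTheory

open scoped ENNReal

/-- Survival function of the rate-1 exponential distribution. -/
lemma expMeasure_one_Ioi {γ : ℝ} (hγ : 0 ≤ γ) :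
    expMeasure 1 (Set.Ioi γ) = ENNReal.ofReal (Real.exp (-γ)) := by
  rw [expMeasure, gammaMeasure, withDensity_apply _ measurableSet_Ioi]
  have h1 : ∀ x ∈ Set.Ioi γ, gammaPDF 1 1 x = ENNReal.ofReal (Real.exp (-x)) := by
    intro x hx
    have hx0 : (0:ℝ) ≤ x := le_trans hγ (le_of_lt hx)
    rw [gammaPDF_of_nonneg hx0]
    norm_num [Real.Gamma_one]
  rw [setLIntegral_congr_fun measurableSet_Ioi h1]
  have hInt : MeasureTheory.IntegrableOn (fun x => Real.exp (-x)) (Set.Ioi γ) := by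
    simpa using exp_neg_integrableOn_Ioi γ one_pos
  rw [← ofReal_integral_eq_lintegral_ofReal hInt
    (Filter.Eventually.of_forall fun x => (Real.exp_pos _).le)]
  rw [integral_exp_neg_Ioi]

/-- Key computation: if `η` is exponentially distributed (rate 1) and independent of `mH`,
and `Γ`, `g` are `mH`-measurable with `Γ ≥ 0`, then
`∫ 1_{Γ < η} g dP = ∫ exp(-Γ) g dP`. -/
lemma key_lintegral {Ω : Type*} (mH : MeasurableSpace Ω) {m0 : MeasurableSpace Ω}
    (hHm0 : mH ≤ m0) (P : Measure Ω) [IsProbabilityMeasure P]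
    (η : Ω → ℝ) (hη : Measurable η) (hη_exp : P.map η = expMeasure 1)
    (hind : Indep (MeasurableSpace.comap η Real.measurableSpace) mH P)
    (Γ : Ω → ℝ) (hΓ : Measurable[mH] Γ) (hΓ0 : ∀ ω, 0 ≤ Γ ω)
    (g : Ω → ℝ≥0∞) (hg : Measurable[mH] g) :
    ∫⁻ ω, Set.indicator {ω' | Γ ω' < η ω'} g ω ∂P
      = ∫⁻ ω, ENNReal.ofReal (Real.exp (-Γ ω)) * g ω ∂P := by
  classical
  set W : Ω → ℝ × ℝ≥0∞ := fun ω => (Γ ω, g ω) with hWdef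
  have hW_H : Measurable[mH] W := hΓ.prodMk hg
  have hW : Measurable W := hW_H.mono hHm0 le_rfl
  have hIndepFun : IndepFun η W P := by
    rw [IndepFun_iff_Indep]
    exact indep_of_indep_of_le_right hind hW_H.comap_le
  haveI : IsProbabilityMeasure (expMeasure 1) := isProbabilityMeasure_expMeasure one_pos
  haveI : IsProbabilityMeasure (P.map W) := Measure.isProbabilityMeasure_map hW.aemeasurable
  have hmap : P.map (fun ω => (η ω, W ω)) = (expMeasure 1).prod (P.map W) := by
    rw [← hη_exp]
    exact (indepFun_iff_map_prod_eq_prod_map_map hη.aemeasurable hW.aemeasurable).mp hIndepFun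
  set F : ℝ × (ℝ × ℝ≥0∞) → ℝ≥0∞ :=
    fun p => Set.indicator {q : ℝ × (ℝ × ℝ≥0∞) | q.2.1 < q.1} (fun q => q.2.2) p with hFdef
  have hFmeas : Measurable F :=
    Measurable.indicator (measurable_snd.snd) (measurableSet_lt measurable_snd.fst measurable_fst)
  have stepA : ∫⁻ ω, Set.indicator {ω' | Γ ω' < η ω'} g ω ∂P = ∫⁻ ω, F (η ω, W ω) ∂P := by
    refine lintegral_congr fun ω => ?_
    simp only [hFdef, Set.indicator_apply, Set.mem_setOf_eq, hWdef]
  have stepB : ∫⁻ ω, F (η ω, W ω) ∂P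
      = ∫⁻ p, F p ∂((expMeasure 1).prod (P.map W)) := by
    rw [← hmap, lintegral_map hFmeas (hη.prodMk hW)]
  have stepC : ∫⁻ p, F p ∂((expMeasure 1).prod (P.map W))
      = ∫⁻ w, (w.2 * expMeasure 1 (Set.Ioi w.1)) ∂(P.map W) := by
    rw [lintegral_prod_symm F hFmeas.aemeasurable]
    refine lintegral_congr fun w => ?_
    have hy : ∀ y : ℝ, F (y, w) = Set.indicator (Set.Ioi w.1) (fun _ => w.2) y := by
      intro y
      simp only [hFdef, Set.indicator_apply, Set.mem_setOf_eq, Set.mem_Ioi]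
    simp_rw [hy]
    rw [lintegral_indicator measurableSet_Ioi, setLIntegral_const]
  have h_ae_nonneg : ∀ᵐ w ∂(P.map W), 0 ≤ w.1 := by
    rw [MeasureTheory.ae_map_iff hW.aemeasurable (measurableSet_le measurable_const measurable_fst)]
    exact Filter.Eventually.of_forall fun ω => hΓ0 ω
  have stepD : ∫⁻ w, (w.2 * expMeasure 1 (Set.Ioi w.1)) ∂(P.map W)
      = ∫⁻ w, (ENNReal.ofReal (Real.exp (-w.1)) * w.2) ∂(P.map W) := by
    refine lintegral_congr_ae ?_
    filter_upwards [h_ae_nonneg] with w hw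
    rw [expMeasure_one_Ioi hw, mul_comm]
  have stepE : ∫⁻ w, (ENNReal.ofReal (Real.exp (-w.1)) * w.2) ∂(P.map W)
      = ∫⁻ ω, ENNReal.ofReal (Real.exp (-Γ ω)) * g ω ∂P := by
    have hm : Measurable (fun w : ℝ × ℝ≥0∞ => ENNReal.ofReal (Real.exp (-w.1)) * w.2) :=
      ((ENNReal.measurable_ofReal.comp
        (Real.measurable_exp.comp measurable_fst.neg)).mul measurable_snd)
    exact lintegral_map hm hW
  rw [stepA, stepB, stepC, stepD, stepE]

/-- Equation (3.7) of the paper: the conditional survival probability is the same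
under any equivalent measure whose density is measurable with respect to a
σ-algebra `ℋ ⊇ ℱ_s` from which the exponential trigger `η` is independent:
`Q(Γ_s < η | ℱ_s) = exp(−Γ_s)` `Q`-a.s., where `Q = D·P`. -/
theorem cox_conditional_survival_forward_measure
    {Ω : Type*} {m0 : MeasurableSpace Ω} (P : Measure Ω) [IsProbabilityMeasure P]
    (η : Ω → ℝ) (hη_meas : Measurable η)
    (hη_exp : P.map η = expMeasure 1)
    (ms mH : MeasurableSpace Ω) (hsH : ms ≤ mH) (hHm0 : mH ≤ m0)
    (hη_indep : Indep (MeasurableSpace.comap η Real.measurableSpace) mH P)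
    (Γs : Ω → ℝ) (hΓ_meas : Measurable[ms] Γs) (hΓ_nonneg : ∀ ω, 0 ≤ Γs ω)
    (D : Ω → ℝ) (hD_meas : Measurable[mH] D) (hD_pos : ∀ ω, 0 < D ω)
    (hD_int : Integrable D P) (hD_mean : ∫ ω, D ω ∂P = 1)
    (Q : @Measure Ω m0) (hQ : Q = P.withDensity (fun ω => ENNReal.ofReal (D ω))) :
    Q[Set.indicator {ω | Γs ω < η ω} (fun _ => (1 : ℝ)) | ms]
      =ᵐ[Q] fun ω => Real.exp (-Γs ω) := by
  classical
  letI : MeasurableSpace Ω := m0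
  have hms : ms ≤ m0 := hsH.trans hHm0
  have hΓ0 : Measurable[m0] Γs := hΓ_meas.mono hms le_rfl
  have hΓH : Measurable[mH] Γs := hΓ_meas.mono hsH le_rfl
  have hD0 : Measurable[m0] D := hD_meas.mono hHm0 le_rfl
  have hD_nonneg : ∀ᵐ ω ∂P, 0 ≤ D ω := Filter.Eventually.of_forall fun ω => (hD_pos ω).le
  haveI : IsProbabilityMeasure Q := by
    constructor
    rw [hQ, withDensity_apply _ MeasurableSet.univ, Measure.restrict_univ,
      ← ofReal_integral_eq_lintegral_ofReal hD_int hD_nonneg, hD_mean, ENNReal.ofReal_one]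
  set A : Set Ω := {ω | Γs ω < η ω} with hAdef
  have hA : MeasurableSet[m0] A := measurableSet_lt hΓ0 hη_meas
  have hf_int : Integrable (Set.indicator A (fun _ => (1 : ℝ))) Q :=
    (integrable_const (1:ℝ)).indicator hA
  have hexp_meas : Measurable[m0] fun ω => ENNReal.ofReal (Real.exp (-Γs ω)) :=
    ENNReal.measurable_ofReal.comp (Real.measurable_exp.comp hΓ0.neg)
  have hg_intQ : Integrable (fun ω => Real.exp (-Γs ω)) Q := by
    refine Integrable.mono' (integrable_const (1:ℝ))
      ((Real.measurable_exp.comp hΓ0.neg).aestronglyMeasurable) ?_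
    refine Filter.Eventually.of_forall fun ω => ?_
    rw [Real.norm_eq_abs, abs_of_pos (Real.exp_pos _)]
    exact Real.exp_le_one_iff.mpr (neg_nonpos.mpr (hΓ_nonneg ω))
  refine (ae_eq_condExp_of_forall_setIntegral_eq hms hf_int
    (fun s _ _ => hg_intQ.integrableOn) (fun s hs hμs => ?_) ?_).symm
  swap
  · exact StronglyMeasurable.aestronglyMeasurable
      ((Real.measurable_exp.comp hΓ_meas.neg).stronglyMeasurable)
  have hs0 : MeasurableSet[m0] s := hms s hs
  have hsH' : MeasurableSet[mH] s := hsH s hs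
  have hRHS : ∫ x in s, Set.indicator A (fun _ => (1:ℝ)) x ∂Q = (Q (s ∩ A)).toReal := by
    rw [setIntegral_indicator hA, setIntegral_const, smul_eq_mul, mul_one, measureReal_def]
  have hLHS : ∫ x in s, Real.exp (-Γs x) ∂Q
      = (∫⁻ x in s, ENNReal.ofReal (Real.exp (-Γs x)) ∂Q).toReal := by
    rw [integral_eq_lintegral_of_nonneg_ae (f := fun ω => Real.exp (-Γs ω))
      (Filter.Eventually.of_forall fun ω => (Real.exp_pos _).le)
      ((Real.measurable_exp.comp hΓ0.neg).aestronglyMeasurable)]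
  set h : Ω → ℝ≥0∞ := fun ω => ENNReal.ofReal (D ω) with hhdef
  have hhH : Measurable[mH] h := ENNReal.measurable_ofReal.comp hD_meas
  have hh0 : Measurable[m0] h := ENNReal.measurable_ofReal.comp hD0
  have hkey := key_lintegral mH hHm0 P η hη_meas hη_exp hη_indep Γs hΓH hΓ_nonneg
    (Set.indicator s h) (hhH.indicator hsH')
  have hkeyL : ∫⁻ ω, Set.indicator A (Set.indicator s h) ω ∂P = Q (s ∩ A) := by
    rw [Set.indicator_indicator, lintegral_indicator (hA.inter hs0), hQ,
      withDensity_apply _ (hs0.inter hA), Set.inter_comm]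
  have hkeyR : ∫⁻ ω, ENNReal.ofReal (Real.exp (-Γs ω)) * Set.indicator s h ω ∂P
      = ∫⁻ x in s, ENNReal.ofReal (Real.exp (-Γs x)) ∂Q := by
    have hpt : ∀ ω, ENNReal.ofReal (Real.exp (-Γs ω)) * Set.indicator s h ω
        = Set.indicator s (fun ω' => (h * fun ω'' => ENNReal.ofReal (Real.exp (-Γs ω''))) ω') ω := by
      intro ω
      by_cases hω : ω ∈ s <;> simp [Set.indicator_apply, hω, mul_comm]
    simp_rw [hpt]
    rw [lintegral_indicator hs0, hQ,
      setLIntegral_withDensity_eq_setLIntegral_mul P hh0 hexp_meas hs0]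
  rw [hLHS, hRHS]
  congr 1
  rw [← hkeyR, ← hkeyL, hkey]
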